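/- Let A be a symmetric n×n matrix over ℤ/2, a a row vector, α ∈ ℤ/2, and B = [[A, aᵀ],[a, α]]. If corank(B) = corank(A) then a ∈ rowspace(A) and (0,…,0,1) ∈ rowspace(B). -/

import Mathlib

open Matrix

/-- The symmetric bordered matrix `[[A, aᵀ],[a, α]]`. -/
def border {n : ℕ} (A : Matrix (Fin n) (Fin n) (ZMod 2)) (a : Fin n → ZMod 2)
    (α : ZMod 2) : Matrix (Fin n ⊕ Unit) (Fin n ⊕ Unit) (ZMod 2) :=
  Matrix.fromBlocks A (Matrix.of fun i _ => a i) (Matrix.of fun _ j => a j)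
    (Matrix.of fun _ _ => α)

/-- The row space of a matrix: the span of its rows. -/
def rowSpace {m n : Type*} (M : Matrix m n (ZMod 2)) : Submodule (ZMod 2) (n → ZMod 2) :=
  Submodule.span (ZMod 2) (Set.range fun i => M i)

/-- The standard basis row vector `(0,…,0,1)` of length `n+1`. -/
def eLast (n : ℕ) : Fin n ⊕ Unit → ZMod 2 :=
  Sum.elim (fun _ => 0) (fun _ => 1)

/-- The corank of a square matrix, as an integer: size minus rank. -/
noncomputable def corankZ {m : Type*} [Fintype m] (M : Matrix m m (ZMod 2)) : ℤ :=
  (Fintype.card m : ℤ) - M.rank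

open Submodule Module

lemma my_finrank_span_insert {K V : Type*} [Field K] [AddCommGroup V] [Module K V]
    [FiniteDimensional K V] {s : Set V} {v : V} (hv : v ∉ Submodule.span K s) :
    finrank K (Submodule.span K (insert v s)) = finrank K (Submodule.span K s) + 1 := by
  have hv0 : v ≠ 0 := fun h => hv (h ▸ (Submodule.span K s).zero_mem)
  rw [Submodule.span_insert]
  have hinf : (K ∙ v) ⊓ Submodule.span K s = ⊥ := by
    rw [Submodule.eq_bot_iff]
    rintro x ⟨hx1, hx2⟩
    rcases Submodule.mem_span_singleton.mp hx1 with ⟨c, rfl⟩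
    rcases eq_or_ne c 0 with rfl | hc
    · simp
    · exact absurd ((Submodule.smul_mem_iff _ hc).mp hx2) hv
  have := Submodule.finrank_sup_add_finrank_inf_eq (K ∙ v) (Submodule.span K s)
  rw [hinf, finrank_bot, finrank_span_singleton hv0] at this
  omega

theorem stmt10 {n : ℕ} (A : Matrix (Fin n) (Fin n) (ZMod 2)) (hA : A.IsSymm)
    (a : Fin n → ZMod 2) (α : ZMod 2)
    (h : corankZ (border A a α) = corankZ A) :
    a ∈ rowSpace A ∧ eLast n ∈ rowSpace (border A a α) := by
  classical
  set B := border A a α with hBdef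
  -- the rows of B
  set rl : Fin n → (Fin n ⊕ Unit → ZMod 2) :=
    fun i => Sum.elim (A i) (fun _ => a i) with hrl
  set rr : Fin n ⊕ Unit → ZMod 2 := Sum.elim a (fun _ => α) with hrr
  have hrowl : ∀ i, B (Sum.inl i) = rl i := by
    intro i; funext j; cases j <;> simp [hBdef, border, Matrix.fromBlocks, hrl]
  have hrowr : ∀ u : Unit, B (Sum.inr u) = rr := by
    intro u; funext j; cases j <;> simp [hBdef, border, Matrix.fromBlocks, hrr]
  have hrange : Set.range (fun i => B i) = insert rr (Set.range rl) := by
    have : (fun i => B i) = Sum.elim rl (fun _ => rr) := by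
      funext i; cases i with
      | inl i => exact hrowl i
      | inr u => exact hrowr u
    rw [this, Set.Sum.elim_range]
    simp only [Set.range_const]
    rw [Set.union_singleton]
  -- rank equation
  have hrank : B.rank = A.rank + 1 := by
    unfold corankZ at h
    rw [show Fintype.card (Fin n ⊕ Unit) = n + 1 by simp, Fintype.card_fin] at h
    omega
  -- Step 1: a ∈ rowSpace A
  have ha : a ∈ rowSpace A := by
    by_contra ha
    -- the matrix C whose transpose has rows rl
    set C : Matrix (Fin n ⊕ Unit) (Fin n) (ZMod 2) := (Matrix.of rl)ᵀ with hC
    have hsym : ∀ i j, A j i = A i j := fun i j => congrFun (congrFun hA i) j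
    have hCrows : (fun i => C i) = Sum.elim A (fun _ => a) := by
      funext i'
      cases i' with
      | inl i =>
        funext j
        show rl j (Sum.inl i) = A i j
        simp only [hrl, Sum.elim_inl]
        exact hsym i j
      | inr u => rfl
    have hrangeC : Set.range (fun i => C i) = insert a (Set.range A) := by
      rw [hCrows]
      erw [Set.Sum.elim_range]
      simp only [Set.range_const]
      rw [Set.union_singleton]
    have hrankC : C.rank = A.rank + 1 := by
      rw [Matrix.rank_eq_finrank_span_row, show C.row = fun i => C i from rfl, hrangeC,
        my_finrank_span_insert ha,
        Matrix.rank_eq_finrank_span_row, show A.row = fun i => A i from rfl]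
    -- rr is not in the span of the rl's
    have hrrnot : rr ∉ Submodule.span (ZMod 2) (Set.range rl) := by
      intro hmem
      rcases (mem_span_range_iff_exists_fun (ZMod 2)).mp hmem with ⟨c, hc⟩
      apply ha
      refine (mem_span_range_iff_exists_fun (ZMod 2)).mpr ⟨c, ?_⟩
      funext i
      have := congrFun hc (Sum.inl i)
      simpa [hrl, hrr, Finset.sum_apply] using this
    have hr2 : Module.finrank (ZMod 2) (Submodule.span (ZMod 2) (Set.range rl))
        = A.rank + 1 := by
      have h1 : (Matrix.of rl).rank
          = Module.finrank (ZMod 2) (Submodule.span (ZMod 2) (Set.range rl)) :=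
        Matrix.rank_eq_finrank_span_row _
      rw [← h1, show Matrix.of rl = Cᵀ from rfl, Matrix.rank_transpose, hrankC]
    have hrankB : B.rank = A.rank + 1 + 1 := by
      rw [Matrix.rank_eq_finrank_span_row, show B.row = fun i => B i from rfl, hrange,
        my_finrank_span_insert hrrnot, hr2]
    omega
  -- Step 2
  rcases (mem_span_range_iff_exists_fun (ZMod 2)).mp ha with ⟨x, hx⟩
  refine ⟨ha, ?_⟩
  set β : ZMod 2 := α - ∑ i, x i * a i with hβ
  have h2 : ∀ z : ZMod 2, z = 0 ∨ z = 1 := by decide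
  rcases h2 β with hβ0 | hβ1
  · -- contradiction: rank B = rank A
    exfalso
    have hrrmem : rr ∈ Submodule.span (ZMod 2) (Set.range rl) := by
      refine (mem_span_range_iff_exists_fun (ZMod 2)).mpr ⟨x, ?_⟩
      funext j
      cases j with
      | inl j =>
        have := congrFun hx j
        simpa [hrl, hrr, Finset.sum_apply] using this
      | inr u =>
        have : α = ∑ i, x i * a i := by
          have h0 := hβ0
          rw [hβ, sub_eq_zero] at h0
          exact h0
        simpa [hrl, hrr, Finset.sum_apply] using this.symm
    have hspan : Submodule.span (ZMod 2) (Set.range fun i => B i)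
        = Submodule.span (ZMod 2) (Set.range rl) := by
      rw [hrange, Submodule.span_insert_eq_span hrrmem]
    set π : ((Fin n ⊕ Unit) → ZMod 2) →ₗ[ZMod 2] (Fin n → ZMod 2) :=
      LinearMap.funLeft (ZMod 2) (ZMod 2) Sum.inl with hπ
    set p := Submodule.span (ZMod 2) (Set.range rl) with hp
    have hker : LinearMap.ker (π.domRestrict p) = ⊥ := by
      rw [LinearMap.ker_eq_bot']
      rintro ⟨v, hv⟩ hv0
      rcases (mem_span_range_iff_exists_fun (ZMod 2)).mp hv with ⟨c, hc⟩
      have hπv : ∀ j, v (Sum.inl j) = 0 := by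
        intro j
        have := congrFun hv0 j
        simpa [hπ, LinearMap.domRestrict_apply, LinearMap.funLeft_apply] using this
      have hcA : ∀ j, ∑ i, c i * A i j = 0 := by
        intro j
        have := congrFun hc (Sum.inl j)
        rw [hπv j] at this
        simpa [hrl, Finset.sum_apply] using this
      have hca : ∑ i, c i * a i = 0 := by
        have ha' : ∀ i, a i = ∑ k, x k * A k i := fun i => (congrFun hx i).symm.trans
          (by simp [Finset.sum_apply])
        calc ∑ i, c i * a i = ∑ i, c i * ∑ k, x k * A k i := by
              simp_rw [← ha']
          _ = ∑ k, x k * ∑ i, c i * A k i := by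
              simp_rw [Finset.mul_sum]
              rw [Finset.sum_comm]
              congr 1; funext i; congr 1; funext k; ring
          _ = ∑ k, x k * ∑ i, c i * A i k := by
              have hsym : ∀ i j, A j i = A i j := fun i j => congrFun (congrFun hA i) j
              exact Finset.sum_congr rfl fun k _ => by
                rw [Finset.sum_congr rfl fun i _ => by rw [hsym i k]]
          _ = 0 := by simp [hcA]
      have : v = 0 := by
        funext j
        cases j with
        | inl j => exact hπv j
        | inr u =>
          have := congrFun hc (Sum.inr u)
          rw [← this]
          simpa [hrl, Finset.sum_apply] using hca
      exact Subtype.ext this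
    have hrangeπ : LinearMap.range (π.domRestrict p) = Submodule.map π p := by
      ext v; simp [LinearMap.mem_range, Submodule.mem_map]
    have hmapπ : Submodule.map π p = Submodule.span (ZMod 2) (Set.range fun i => A i) := by
      rw [hp, Submodule.map_span, ← Set.range_comp]
      have : (⇑π ∘ rl) = fun i => A i := by
        funext i; funext j
        simp [hπ, LinearMap.funLeft_apply, hrl]
      rw [this]
    have hrn := LinearMap.finrank_range_add_finrank_ker (π.domRestrict p)
    rw [hker, finrank_bot, hrangeπ, hmapπ] at hrn
    have : B.rank = A.rank := by
      rw [Matrix.rank_eq_finrank_span_row, show B.row = fun i => B i from rfl, hspan, ← hrn,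
        add_zero]
      exact (Matrix.rank_eq_finrank_span_row A).symm
    omega
  · -- eLast = rr - ∑ x i • rl i ∈ rowSpace B
    have hmem : rr - ∑ i, x i • rl i ∈ rowSpace B := by
      refine Submodule.sub_mem _ ?_ ?_
      · exact Submodule.subset_span ⟨Sum.inr (), hrowr ()⟩
      · refine Submodule.sum_mem _ fun i _ => Submodule.smul_mem _ _ ?_
        exact Submodule.subset_span ⟨Sum.inl i, hrowl i⟩
    have heq : eLast n = rr - ∑ i, x i • rl i := by
      funext j
      cases j with
      | inl j =>
        have := congrFun hx j
        simp only [Finset.sum_apply, Pi.smul_apply, smul_eq_mul] at this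
        simp [eLast, hrr, hrl, Finset.sum_apply, this]
      | inr u =>
        have h1' : α - ∑ i, x i * a i = 1 := by rw [← hβ]; exact hβ1
        simpa [eLast, hrr, hrl, Finset.sum_apply] using h1'.symm
    rw [heq]
    exact hmem
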